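/- Let d be a positive integer and let x_1, …, x_{d+1} ∈ {1,…,d+1} satisfy x_i ≠ i for every i. Then the number of unordered pairs {i, j} with i ≠ j and x_i = x_j is at most C(d+1, 2) − d; equivalently, at least d of the C(d+1, 2) pairwise equalities x_i = x_j fail. -/
import Mathlib

lemma card_lt_pairs (n : ℕ) :
    ((Finset.univ : Finset (Fin n × Fin n)).filter
      (fun ij => ij.1 < ij.2)).card = n.choose 2 := by
  rw [Finset.card_filter]
  rw [Fintype.sum_prod_type_right]
  have h : ∀ j : Fin n, (∑ i : Fin n, if i < j then 1 else 0) = (j : ℕ) := by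
    intro j
    rw [← Finset.card_filter]
    have h2 : Finset.univ.filter (fun i : Fin n => i < j) = Finset.Iio j := by
      ext i; simp
    rw [h2, Fin.card_Iio]
  simp only [h]
  rw [Fin.sum_univ_eq_sum_range (fun i => i) n, Finset.sum_range_id,
    Nat.choose_two_right]

theorem stmt_6 (d : ℕ) (hd : 0 < d) (x : Fin (d + 1) → Fin (d + 1))
    (hx : ∀ i, x i ≠ i) :
    (Finset.univ.filter
        (fun ij : Fin (d + 1) × Fin (d + 1) =>
          ij.1 < ij.2 ∧ x ij.1 = x ij.2)).card ≤ (d + 1).choose 2 - d ∧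
    d ≤ (Finset.univ.filter
        (fun ij : Fin (d + 1) × Fin (d + 1) =>
          ij.1 < ij.2 ∧ x ij.1 ≠ x ij.2)).card := by
  set S : Finset (Fin (d + 1)) := Finset.univ.filter (fun i => x i = x 0) with hS
  set T : Finset (Fin (d + 1)) := Finset.univ.filter (fun i => x i ≠ x 0) with hT
  have h0S : (0 : Fin (d + 1)) ∈ S := by simp [hS]
  have hvT : x 0 ∈ T := by simpa [hT] using hx (x 0)
  have hcards : S.card + T.card = d + 1 := by
    rw [hS, hT, Finset.card_filter_add_card_filter_not]
    simp
  have hS1 : 1 ≤ S.card := Finset.card_pos.mpr ⟨0, h0S⟩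
  have hT1 : 1 ≤ T.card := Finset.card_pos.mpr ⟨x 0, hvT⟩
  have key : d ≤ (Finset.univ.filter
      (fun ij : Fin (d + 1) × Fin (d + 1) => ij.1 < ij.2 ∧ x ij.1 ≠ x ij.2)).card := by
    set f : Fin (d + 1) × Fin (d + 1) → Fin (d + 1) × Fin (d + 1) :=
      fun p => if p.1 < p.2 then p else (p.2, p.1) with hf
    have hmem : ∀ a b : Fin (d + 1), (a, b) ∈ S ×ˢ T →
        x a = x 0 ∧ x b ≠ x 0 := by
      intro a b hp
      obtain ⟨h1, h2⟩ := Finset.mem_product.mp hp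
      rw [hS, Finset.mem_filter] at h1
      rw [hT, Finset.mem_filter] at h2
      exact ⟨h1.2, h2.2⟩
    have hmaps : ∀ p ∈ S ×ˢ T, f p ∈ Finset.univ.filter
        (fun ij : Fin (d + 1) × Fin (d + 1) => ij.1 < ij.2 ∧ x ij.1 ≠ x ij.2) := by
      rintro ⟨a, b⟩ hp
      obtain ⟨ha, hb⟩ := hmem a b hp
      have hne : x a ≠ x b := by rw [ha]; exact fun h => hb h.symm
      have hab : a ≠ b := fun h => hne (h ▸ rfl)
      simp only [hf, Finset.mem_filter, Finset.mem_univ, true_and]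
      split_ifs with h1
      · exact ⟨h1, hne⟩
      · exact ⟨lt_of_le_of_ne (not_lt.mp h1) (Ne.symm hab), hne.symm⟩
    have hinj : ∀ a ∈ S ×ˢ T, ∀ b ∈ S ×ˢ T, f a = f b → a = b := by
      rintro ⟨a1, a2⟩ ha ⟨b1, b2⟩ hb h
      obtain ⟨ha1, ha2⟩ := hmem a1 a2 ha
      obtain ⟨hb1, hb2⟩ := hmem b1 b2 hb
      simp only [hf] at h
      split_ifs at h with h1 h2 h2 <;>
        simp only [Prod.mk.injEq] at h ⊢
      · exact h
      · exact absurd (h.1 ▸ ha1) hb2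
      · exact absurd (h.1.symm ▸ hb1) ha2
      · exact ⟨h.2, h.1⟩
    have hle := Finset.card_le_card_of_injOn f hmaps hinj
    rw [Finset.card_product] at hle
    have hst : d ≤ S.card * T.card := by nlinarith [hS1, hT1, hcards]
    exact hst.trans hle
  refine ⟨?_, key⟩
  have hsplit : ((Finset.univ : Finset (Fin (d + 1) × Fin (d + 1))).filter
        (fun ij => ij.1 < ij.2 ∧ x ij.1 = x ij.2)).card +
      ((Finset.univ : Finset (Fin (d + 1) × Fin (d + 1))).filter
        (fun ij => ij.1 < ij.2 ∧ x ij.1 ≠ x ij.2)).card = (d + 1).choose 2 := by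
    rw [← card_lt_pairs (d + 1), ← Finset.filter_filter, ← Finset.filter_filter]
    exact Finset.card_filter_add_card_filter_not _
  omega
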